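/- Fix n ≥ 1, m ≥ 1, T > 0, x₀ ∈ ℝⁿ, an n×n real matrix A and an n×m real matrix B. Let r₁ : ℝⁿ → ℝ be concave and continuous, r₂ : ℝ^m → ℝ concave, and q : ℝⁿ → ℝ concave and continuous. Suppose that for every α in the box [0,1]^m there is a function x_α : ℝ → ℝⁿ with x_α(0) = x₀ and x_α'(t) = A x_α(t) + B α for all t ∈ [0,T]. Then the payoff function J(α) := ∫₀ᵀ ( r₁(x_α(t)) + r₂(α) ) dt + q(x_α(T)) is concave on [0,1]^m. -/

import Mathlib

/-- Concavity of the payoff of a linear combinatorial dynamical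
system: if `r₁`, `r₂`, `q` are concave (`r₁`, `q` also continuous) and `X α` solves
`x' = A x + B α`, `x(0) = x₀` for each `α` in the box `[0,1]^m`, then
`J(α) = ∫₀ᵀ (r₁(X α t) + r₂ α) dt + q(X α T)` is concave on the box. -/
theorem stmt_16 (n m : ℕ) (hn : 1 ≤ n) (hm : 1 ≤ m) (T : ℝ) (hT : 0 < T)
    (x₀ : Fin n → ℝ)
    (A : Matrix (Fin n) (Fin n) ℝ) (B : Matrix (Fin n) (Fin m) ℝ)
    (r₁ : (Fin n → ℝ) → ℝ) (r₂ : (Fin m → ℝ) → ℝ) (q : (Fin n → ℝ) → ℝ)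
    (hr₁ : ConcaveOn ℝ Set.univ r₁) (hr₁c : Continuous r₁)
    (hr₂ : ConcaveOn ℝ Set.univ r₂)
    (hq : ConcaveOn ℝ Set.univ q) (hqc : Continuous q)
    (X : (Fin m → ℝ) → ℝ → (Fin n → ℝ))
    (hX0 : ∀ α : Fin m → ℝ, (∀ i, α i ∈ Set.Icc (0 : ℝ) 1) → X α 0 = x₀)
    (hXode : ∀ α : Fin m → ℝ, (∀ i, α i ∈ Set.Icc (0 : ℝ) 1) →
      ∀ t ∈ Set.Icc (0 : ℝ) T,
        HasDerivAt (X α) (A.mulVec (X α t) + B.mulVec α) t) :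
    ConcaveOn ℝ {α : Fin m → ℝ | ∀ i, α i ∈ Set.Icc (0 : ℝ) 1}
      (fun α => (∫ t in (0 : ℝ)..T, (r₁ (X α t) + r₂ α)) + q (X α T)) := by
  classical
  -- Continuity of trajectories on [0,T]
  have hXcont : ∀ α : Fin m → ℝ, (∀ i, α i ∈ Set.Icc (0 : ℝ) 1) →
      ContinuousOn (X α) (Set.Icc 0 T) := by
    intro α hα t ht
    exact ((hXode α hα t ht).continuousAt).continuousWithinAt
  have hint : ∀ α : Fin m → ℝ, (∀ i, α i ∈ Set.Icc (0 : ℝ) 1) →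
      IntervalIntegrable (fun t => r₁ (X α t) + r₂ α) MeasureTheory.volume 0 T := by
    intro α hα
    apply ContinuousOn.intervalIntegrable
    rw [Set.uIcc_of_le hT.le]
    exact (hr₁c.comp_continuousOn (hXcont α hα)).add continuousOn_const
  -- convexity of the box
  constructor
  · intro α hα β hβ a b ha hb hab i
    have h1 := hα i; have h2 := hβ i
    simp only [Set.mem_Icc] at h1 h2 ⊢
    constructor
    · have : (0:ℝ) ≤ a * α i + b * β i :=
        add_nonneg (mul_nonneg ha h1.1) (mul_nonneg hb h2.1)
      simpa using this
    · have : a * α i + b * β i ≤ a * 1 + b * 1 :=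
        add_le_add (mul_le_mul_of_nonneg_left h1.2 ha) (mul_le_mul_of_nonneg_left h2.2 hb)
      simpa [hab] using this
  intro α hα β hβ a b ha hb hab
  set γ : Fin m → ℝ := a • α + b • β with hγdef
  have hγ : ∀ i, γ i ∈ Set.Icc (0 : ℝ) 1 := by
    intro i
    have h1 := hα i; have h2 := hβ i
    simp only [Set.mem_Icc] at h1 h2 ⊢
    constructor
    · have : (0:ℝ) ≤ a * α i + b * β i :=
        add_nonneg (mul_nonneg ha h1.1) (mul_nonneg hb h2.1)
      simpa [hγdef] using this
    · have : a * α i + b * β i ≤ a * 1 + b * 1 :=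
        add_le_add (mul_le_mul_of_nonneg_left h1.2 ha) (mul_le_mul_of_nonneg_left h2.2 hb)
      simpa [hγdef, hab] using this
  -- the convex combination of trajectories
  set Z : ℝ → Fin n → ℝ := fun t => a • X α t + b • X β t with hZdef
  have hZode : ∀ t ∈ Set.Icc (0:ℝ) T,
      HasDerivAt Z (A.mulVec (Z t) + B.mulVec γ) t := by
    intro t ht
    have h := ((hXode α hα t ht).const_smul a).add ((hXode β hβ t ht).const_smul b)
    refine h.congr_deriv ?_
    simp only [hZdef, hγdef, Matrix.mulVec_add, Matrix.mulVec_smul, smul_add]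
    abel
  -- Lipschitz vector field
  set L := (Matrix.mulVecLin A).toContinuousLinearMap with hL
  have hlip : ∀ t : ℝ, LipschitzWith ‖L‖₊
      (fun x : Fin n → ℝ => A.mulVec x + B.mulVec γ) := by
    intro t
    apply LipschitzWith.of_dist_le_mul
    intro x y
    have : A.mulVec x + B.mulVec γ - (A.mulVec y + B.mulVec γ) = L x - L y := by
      simp [hL]
    rw [dist_eq_norm, this, ← dist_eq_norm]
    exact L.lipschitz.dist_le_mul x y
  -- uniqueness: X γ = Z on [0, T]
  have key : Set.EqOn (X γ) Z (Set.Icc 0 T) := by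
    apply ODE_solution_unique (v := fun _ x => A.mulVec x + B.mulVec γ) hlip
      (hXcont γ hγ)
      (fun t ht => ((hXode γ hγ t (Set.mem_Icc_of_Ico ht)).hasDerivWithinAt))
      (fun t ht => ((hZode t ht).continuousAt).continuousWithinAt)
      (fun t ht => ((hZode t (Set.mem_Icc_of_Ico ht)).hasDerivWithinAt))
    simp [hZdef, hX0 α hα, hX0 β hβ, hX0 γ hγ, ← add_smul, hab]
  have hTmem : T ∈ Set.Icc (0:ℝ) T := ⟨hT.le, le_refl T⟩
  -- rewrite J γ in terms of Z
  have hJγ : (∫ t in (0:ℝ)..T, (r₁ (X γ t) + r₂ γ)) + q (X γ T)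
      = (∫ t in (0:ℝ)..T, (r₁ (Z t) + r₂ γ)) + q (Z T) := by
    rw [key hTmem]
    congr 1
    apply intervalIntegral.integral_congr
    intro t ht
    rw [Set.uIcc_of_le hT.le] at ht
    simp only [key ht]
  simp only [smul_eq_mul]
  rw [hJγ]
  -- pointwise concavity inequalities
  have hZint : IntervalIntegrable (fun t => r₁ (Z t) + r₂ γ) MeasureTheory.volume 0 T := by
    apply ContinuousOn.intervalIntegrable
    rw [Set.uIcc_of_le hT.le]
    refine (hr₁c.comp_continuousOn ?_).add continuousOn_const
    exact ((hXcont α hα).const_smul a).add ((hXcont β hβ).const_smul b)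
  have hmono : a * (∫ t in (0:ℝ)..T, (r₁ (X α t) + r₂ α))
      + b * (∫ t in (0:ℝ)..T, (r₁ (X β t) + r₂ β))
      ≤ ∫ t in (0:ℝ)..T, (r₁ (Z t) + r₂ γ) := by
    rw [← intervalIntegral.integral_const_mul, ← intervalIntegral.integral_const_mul,
      ← intervalIntegral.integral_add ((hint α hα).const_mul a) ((hint β hβ).const_mul b)]
    apply intervalIntegral.integral_mono_on hT.le
      (((hint α hα).const_mul a).add ((hint β hβ).const_mul b)) hZint
    intro t ht
    have h1 := hr₁.2 (Set.mem_univ (X α t)) (Set.mem_univ (X β t)) ha hb hab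
    have h2 := hr₂.2 (Set.mem_univ α) (Set.mem_univ β) ha hb hab
    simp only [smul_eq_mul] at h1 h2 ⊢
    have : a * (r₁ (X α t) + r₂ α) + b * (r₁ (X β t) + r₂ β)
        = (a * r₁ (X α t) + b * r₁ (X β t)) + (a * r₂ α + b * r₂ β) := by ring
    rw [this]
    exact add_le_add h1 h2
  have hqT : a * q (X α T) + b * q (X β T) ≤ q (Z T) := by
    have := hq.2 (Set.mem_univ (X α T)) (Set.mem_univ (X β T)) ha hb hab
    simpa [hZdef] using this
  calc a * ((∫ t in (0:ℝ)..T, (r₁ (X α t) + r₂ α)) + q (X α T))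
      + b * ((∫ t in (0:ℝ)..T, (r₁ (X β t) + r₂ β)) + q (X β T))
      = (a * (∫ t in (0:ℝ)..T, (r₁ (X α t) + r₂ α))
          + b * (∫ t in (0:ℝ)..T, (r₁ (X β t) + r₂ β)))
        + (a * q (X α T) + b * q (X β T)) := by ring
    _ ≤ (∫ t in (0:ℝ)..T, (r₁ (Z t) + r₂ γ)) + q (Z T) := add_le_add hmono hqT
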